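/- Let K = U S Uᵀ be symmetric positive definite with eigenvalues s_i > 0, y = Kα₀ + ε, E[ε]=0, Cov(ε)=σ²I. Then for every α₀ ∈ ℝ^n and t > 0, the estimation risk of kernel gradient flow satisfies Risk(α_KGF(t); α₀) = Σᵢ ((U_{:,i}ᵀα₀)² e^{−2ts_i} + σ²(1−e^{−ts_i})²/s_i²) ≤ 1.6862 · Σᵢ ((U_{:,i}ᵀα₀)²/(ts_i+1)² + σ² t²/(ts_i+1)²) = 1.6862 · Risk(α_KRR(1/t); α₀). -/

import Mathlib

open Matrix MeasureTheory

section analytic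
open Real

lemma exp_bds (x L U : ℝ) (hx0 : 0 ≤ x) (hx1 : x ≤ 1)
    (hL : L ≤ 1 + x + x^2/2 + x^3/6 + x^4/24 + x^5/120 + x^6/720 + x^7/5040 + x^8/40320
        + x^9/362880)
    (hU : 1 + x + x^2/2 + x^3/6 + x^4/24 + x^5/120 + x^6/720 + x^7/5040 + x^8/40320
        + x^9/362880 + x^10*11/36288000 ≤ U) :
    L ≤ Real.exp x ∧ Real.exp x ≤ U := by
  have hsum : ∑ m ∈ Finset.range 10, x^m/(Nat.factorial m)
      = 1 + x + x^2/2 + x^3/6 + x^4/24 + x^5/120 + x^6/720 + x^7/5040 + x^8/40320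
        + x^9/362880 := by
    norm_num [Finset.sum_range_succ, Nat.factorial]
  constructor
  · have h := Real.sum_le_exp_of_nonneg hx0 10
    rw [hsum] at h
    linarith
  · have h := Real.exp_bound' hx0 hx1 (n := 10) (by norm_num)
    rw [hsum] at h
    norm_num [Nat.factorial] at h
    linarith

lemma phi_step (p q L U : ℝ) (hp : 0 ≤ p) (hpq : p ≤ q) (hL0 : 0 < L)
    (hL : L ≤ Real.exp (p/2)) (hU : Real.exp (p/2) ≤ U)
    (hc : 0.2985 ≤ q / L^2)
    (hcheck : q/L^2*(q-p) + 1 ≤ (1+p)/U^2 + 0.2985*q) :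
    ∀ x ∈ Set.Icc p q, 0 ≤ (1+x)*Real.exp (-x) + 0.2985*x - 1 := by
  have hexp2 : Real.exp (p/2) * Real.exp (p/2) = Real.exp p := by
    rw [← Real.exp_add]; ring_nf
  have hU0 : 0 < U := lt_of_lt_of_le (lt_of_lt_of_le hL0 hL) hU
  have hLsq : L^2 ≤ Real.exp p := by
    rw [← hexp2, sq]
    exact mul_le_mul hL hL hL0.le (Real.exp_pos _).le
  have hUsq : Real.exp p ≤ U^2 := by
    rw [← hexp2, sq]
    exact mul_le_mul hU hU (Real.exp_pos _).le hU0.le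
  have heplo : (U^2)⁻¹ ≤ Real.exp (-p) := by
    rw [Real.exp_neg]
    exact inv_anti₀ (Real.exp_pos _) hUsq
  have hephi : Real.exp (-p) ≤ (L^2)⁻¹ := by
    rw [Real.exp_neg]
    exact inv_anti₀ (by positivity) hLsq
  set c : ℝ := q / L^2 with hcdef
  have hder : ∀ y : ℝ, HasDerivAt (fun z => (1+z)*Real.exp (-z) + c*z)
      (c - y * Real.exp (-y)) y := by
    intro y
    have h1 : HasDerivAt (fun z : ℝ => -z) (-1) y := (hasDerivAt_id y).neg
    have h2 : HasDerivAt (fun z : ℝ => Real.exp (-z)) (Real.exp (-y) * (-1)) y :=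
      (Real.hasDerivAt_exp (-y)).comp y h1
    have h3 : HasDerivAt (fun z : ℝ => 1 + z) 1 y := by
      simpa using (hasDerivAt_id y).const_add (1:ℝ)
    have h5 : HasDerivAt (fun z : ℝ => c*z) c y := by
      simpa using (hasDerivAt_id y).const_mul c
    have h4 := (h3.mul h2).add h5
    exact h4.congr_deriv (by ring)
  have hmono : MonotoneOn (fun z => (1+z)*Real.exp (-z) + c*z) (Set.Icc p q) := by
    apply monotoneOn_of_deriv_nonneg (convex_Icc p q)
    · exact (Continuous.continuousOn (by continuity))
    · intro y _
      exact (hder y).differentiableAt.differentiableWithinAt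
    · intro y hy
      rw [interior_Icc] at hy
      rw [(hder y).deriv]
      have hy0 : 0 ≤ y := le_trans hp hy.1.le
      have h1 : Real.exp (-y) ≤ (L^2)⁻¹ := by
        refine le_trans ?_ hephi
        exact Real.exp_le_exp.2 (by linarith [hy.1.le])
      have h2 : y * Real.exp (-y) ≤ q * (L^2)⁻¹ :=
        mul_le_mul hy.2.le h1 (Real.exp_pos _).le (le_trans hp hpq)
      have : q * (L^2)⁻¹ = c := by rw [hcdef]; ring
      linarith [this ▸ h2]
  intro x hx
  have hfpfx := hmono (Set.left_mem_Icc.2 hpq) hx hx.1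
  simp only at hfpfx
  have h1 : (1+p) * (U^2)⁻¹ ≤ (1+p) * Real.exp (-p) :=
    mul_le_mul_of_nonneg_left heplo (by linarith)
  have h2 : (c - 0.2985) * x ≤ (c - 0.2985) * q :=
    mul_le_mul_of_nonneg_left hx.2 (by linarith)
  have h3 : (1+p)/U^2 = (1+p) * (U^2)⁻¹ := by ring
  nlinarith [hfpfx, h1, h2]

lemma phi_tail (x : ℝ) (hx : 2 ≤ x) : 0 ≤ (1+x)*Real.exp (-x) + 0.2985*x - 1 := by
  have he1 : (2.7182818283 : ℝ) < Real.exp 1 := Real.exp_one_gt_d9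
  have he2 : Real.exp 1 < 2.7182818286 := Real.exp_one_lt_d9
  have hexp2 : Real.exp 2 = Real.exp 1 * Real.exp 1 := by
    rw [← Real.exp_add]; norm_num
  have hkey : ∀ y : ℝ, 2 ≤ y → y * Real.exp (-y) ≤ (0.2985:ℝ) := by
    intro y hy
    have h1 : Real.exp (y - 2) ≥ y - 1 := by
      have := Real.add_one_le_exp (y - 2)
      linarith
    have h2 : Real.exp y = Real.exp 2 * Real.exp (y - 2) := by
      rw [← Real.exp_add]; ring_nf
    have h3 : Real.exp y ≥ Real.exp 2 * (y - 1) := by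
      rw [h2]
      exact mul_le_mul_of_nonneg_left h1 (Real.exp_pos _).le
    have h4 : (7.389 : ℝ) ≤ Real.exp 2 := by nlinarith
    have h5 : Real.exp y ≥ 7.389 * (y - 1) := by nlinarith
    rw [Real.exp_neg]
    rw [mul_inv_le_iff₀ (Real.exp_pos _)]
    nlinarith [h5, hy]
  have hder : ∀ y : ℝ, HasDerivAt (fun z => (1+z)*Real.exp (-z) + (0.2985:ℝ)*z)
      ((0.2985:ℝ) - y * Real.exp (-y)) y := by
    intro y
    have h1 : HasDerivAt (fun z : ℝ => -z) (-1) y := (hasDerivAt_id y).neg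
    have h2 : HasDerivAt (fun z : ℝ => Real.exp (-z)) (Real.exp (-y) * (-1)) y :=
      (Real.hasDerivAt_exp (-y)).comp y h1
    have h3 : HasDerivAt (fun z : ℝ => 1 + z) 1 y := by
      simpa using (hasDerivAt_id y).const_add (1:ℝ)
    have h5 : HasDerivAt (fun z : ℝ => (0.2985:ℝ)*z) (0.2985:ℝ) y := by
      simpa using (hasDerivAt_id y).const_mul (0.2985:ℝ)
    have h4 := (h3.mul h2).add h5
    exact h4.congr_deriv (by ring)
  have hmono : MonotoneOn (fun z => (1+z)*Real.exp (-z) + (0.2985:ℝ)*z) (Set.Ici 2) := by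
    apply monotoneOn_of_deriv_nonneg (convex_Ici 2)
    · exact (Continuous.continuousOn (by continuity))
    · intro y _
      exact (hder y).differentiableAt.differentiableWithinAt
    · intro y hy
      rw [interior_Ici] at hy
      rw [(hder y).deriv]
      linarith [hkey y hy.le]
  have hfx := hmono (by exact Set.self_mem_Ici) hx hx
  simp only at hfx
  have hexpneg2 : (0.1353 : ℝ) ≤ Real.exp (-2) := by
    rw [Real.exp_neg, hexp2]
    have h6 : rexp 1 * rexp 1 ≤ 7.3890561 := by nlinarith
    have h7 : (7.3890561:ℝ)⁻¹ ≤ (rexp 1 * rexp 1)⁻¹ := inv_anti₀ (by positivity) h6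
    have : (0.1353:ℝ) ≤ (7.3890561:ℝ)⁻¹ := by norm_num
    linarith
  nlinarith [hfx]
lemma phi_nonneg (x : ℝ) (hx : 0 ≤ x) : 0 ≤ (1+x)*Real.exp (-x) + 0.2985*x - 1 := by
  rcases le_total x 0.2985 with h0|h0
  · refine phi_step 0 0.2985 1.000000000 1.000000000 (by norm_num) (by norm_num) (by norm_num)
      ((exp_bds (0/2) 1.000000000 1.000000000 (by norm_num) (by norm_num) (by norm_num) (by norm_num)).1)
      ((exp_bds (0/2) 1.000000000 1.000000000 (by norm_num) (by norm_num) (by norm_num) (by norm_num)).2)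
      (by norm_num) (by norm_num) x ⟨by linarith, h0⟩
  rcases le_total x 0.62 with h1|h1
  · refine phi_step 0.2985 0.62 1.160963193 1.160963194 (by norm_num) (by norm_num) (by norm_num)
      ((exp_bds (0.2985/2) 1.160963193 1.160963194 (by norm_num) (by norm_num) (by norm_num) (by norm_num)).1)
      ((exp_bds (0.2985/2) 1.160963193 1.160963194 (by norm_num) (by norm_num) (by norm_num) (by norm_num)).2)
      (by norm_num) (by norm_num) x ⟨by linarith, h1⟩
  rcases le_total x 0.91 with h2|h2
  · refine phi_step 0.62 0.91 1.363425114 1.363425115 (by norm_num) (by norm_num) (by norm_num)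
      ((exp_bds (0.62/2) 1.363425114 1.363425115 (by norm_num) (by norm_num) (by norm_num) (by norm_num)).1)
      ((exp_bds (0.62/2) 1.363425114 1.363425115 (by norm_num) (by norm_num) (by norm_num) (by norm_num)).2)
      (by norm_num) (by norm_num) x ⟨by linarith, h2⟩
  rcases le_total x 1.15 with h3|h3
  · refine phi_step 0.91 1.15 1.576173382 1.576173384 (by norm_num) (by norm_num) (by norm_num)
      ((exp_bds (0.91/2) 1.576173382 1.576173384 (by norm_num) (by norm_num) (by norm_num) (by norm_num)).1)
      ((exp_bds (0.91/2) 1.576173382 1.576173384 (by norm_num) (by norm_num) (by norm_num) (by norm_num)).2)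
      (by norm_num) (by norm_num) x ⟨by linarith, h3⟩
  rcases le_total x 1.34 with h4|h4
  · refine phi_step 1.15 1.34 1.777130525 1.777130527 (by norm_num) (by norm_num) (by norm_num)
      ((exp_bds (1.15/2) 1.777130525 1.777130527 (by norm_num) (by norm_num) (by norm_num) (by norm_num)).1)
      ((exp_bds (1.15/2) 1.777130525 1.777130527 (by norm_num) (by norm_num) (by norm_num) (by norm_num)).2)
      (by norm_num) (by norm_num) x ⟨by linarith, h4⟩
  rcases le_total x 1.48 with h5|h5
  · refine phi_step 1.34 1.48 1.954237315 1.954237321 (by norm_num) (by norm_num) (by norm_num)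
      ((exp_bds (1.34/2) 1.954237315 1.954237321 (by norm_num) (by norm_num) (by norm_num) (by norm_num)).1)
      ((exp_bds (1.34/2) 1.954237315 1.954237321 (by norm_num) (by norm_num) (by norm_num) (by norm_num)).2)
      (by norm_num) (by norm_num) x ⟨by linarith, h5⟩
  rcases le_total x 1.58 with h6|h6
  · refine phi_step 1.48 1.58 2.095935499 2.095935515 (by norm_num) (by norm_num) (by norm_num)
      ((exp_bds (1.48/2) 2.095935499 2.095935515 (by norm_num) (by norm_num) (by norm_num) (by norm_num)).1)
      ((exp_bds (1.48/2) 2.095935499 2.095935515 (by norm_num) (by norm_num) (by norm_num) (by norm_num)).2)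
      (by norm_num) (by norm_num) x ⟨by linarith, h6⟩
  rcases le_total x 1.65 with h7|h7
  · refine phi_step 1.58 1.65 2.203396398 2.203396427 (by norm_num) (by norm_num) (by norm_num)
      ((exp_bds (1.58/2) 2.203396398 2.203396427 (by norm_num) (by norm_num) (by norm_num) (by norm_num)).1)
      ((exp_bds (1.58/2) 2.203396398 2.203396427 (by norm_num) (by norm_num) (by norm_num) (by norm_num)).2)
      (by norm_num) (by norm_num) x ⟨by linarith, h7⟩
  rcases le_total x 1.70 with h8|h8
  · refine phi_step 1.65 1.70 2.281880721 2.281880767 (by norm_num) (by norm_num) (by norm_num)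
      ((exp_bds (1.65/2) 2.281880721 2.281880767 (by norm_num) (by norm_num) (by norm_num) (by norm_num)).1)
      ((exp_bds (1.65/2) 2.281880721 2.281880767 (by norm_num) (by norm_num) (by norm_num) (by norm_num)).2)
      (by norm_num) (by norm_num) x ⟨by linarith, h8⟩
  rcases le_total x 1.73 with h9|h9
  · refine phi_step 1.70 1.73 2.339646793 2.339646853 (by norm_num) (by norm_num) (by norm_num)
      ((exp_bds (1.70/2) 2.339646793 2.339646853 (by norm_num) (by norm_num) (by norm_num) (by norm_num)).1)
      ((exp_bds (1.70/2) 2.339646793 2.339646853 (by norm_num) (by norm_num) (by norm_num) (by norm_num)).2)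
      (by norm_num) (by norm_num) x ⟨by linarith, h9⟩
  rcases le_total x 1.75 with h10|h10
  · refine phi_step 1.73 1.75 2.375006015 2.375006087 (by norm_num) (by norm_num) (by norm_num)
      ((exp_bds (1.73/2) 2.375006015 2.375006087 (by norm_num) (by norm_num) (by norm_num) (by norm_num)).1)
      ((exp_bds (1.73/2) 2.375006015 2.375006087 (by norm_num) (by norm_num) (by norm_num) (by norm_num)).2)
      (by norm_num) (by norm_num) x ⟨by linarith, h10⟩
  rcases le_total x 1.77 with h11|h11
  · refine phi_step 1.75 1.77 2.398875215 2.398875295 (by norm_num) (by norm_num) (by norm_num)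
      ((exp_bds (1.75/2) 2.398875215 2.398875295 (by norm_num) (by norm_num) (by norm_num) (by norm_num)).1)
      ((exp_bds (1.75/2) 2.398875215 2.398875295 (by norm_num) (by norm_num) (by norm_num) (by norm_num)).2)
      (by norm_num) (by norm_num) x ⟨by linarith, h11⟩
  rcases le_total x 1.79 with h12|h12
  · refine phi_step 1.77 1.79 2.422984303 2.422984393 (by norm_num) (by norm_num) (by norm_num)
      ((exp_bds (1.77/2) 2.422984303 2.422984393 (by norm_num) (by norm_num) (by norm_num) (by norm_num)).1)
      ((exp_bds (1.77/2) 2.422984303 2.422984393 (by norm_num) (by norm_num) (by norm_num) (by norm_num)).2)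
      (by norm_num) (by norm_num) x ⟨by linarith, h12⟩
  rcases le_total x 1.81 with h13|h13
  · refine phi_step 1.79 1.81 2.447335690 2.447335791 (by norm_num) (by norm_num) (by norm_num)
      ((exp_bds (1.79/2) 2.447335690 2.447335791 (by norm_num) (by norm_num) (by norm_num) (by norm_num)).1)
      ((exp_bds (1.79/2) 2.447335690 2.447335791 (by norm_num) (by norm_num) (by norm_num) (by norm_num)).2)
      (by norm_num) (by norm_num) x ⟨by linarith, h13⟩
  rcases le_total x 1.84 with h14|h14
  · refine phi_step 1.81 1.84 2.471931812 2.471931925 (by norm_num) (by norm_num) (by norm_num)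
      ((exp_bds (1.81/2) 2.471931812 2.471931925 (by norm_num) (by norm_num) (by norm_num) (by norm_num)).1)
      ((exp_bds (1.81/2) 2.471931812 2.471931925 (by norm_num) (by norm_num) (by norm_num) (by norm_num)).2)
      (by norm_num) (by norm_num) x ⟨by linarith, h14⟩
  rcases le_total x 1.90 with h15|h15
  · refine phi_step 1.84 1.90 2.509290259 2.509290392 (by norm_num) (by norm_num) (by norm_num)
      ((exp_bds (1.84/2) 2.509290259 2.509290392 (by norm_num) (by norm_num) (by norm_num) (by norm_num)).1)
      ((exp_bds (1.84/2) 2.509290259 2.509290392 (by norm_num) (by norm_num) (by norm_num) (by norm_num)).2)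
      (by norm_num) (by norm_num) x ⟨by linarith, h15⟩
  rcases le_total x 2 with h16|h16
  · refine phi_step 1.90 2 2.585709478 2.585709661 (by norm_num) (by norm_num) (by norm_num)
      ((exp_bds (1.90/2) 2.585709478 2.585709661 (by norm_num) (by norm_num) (by norm_num) (by norm_num)).1)
      ((exp_bds (1.90/2) 2.585709478 2.585709661 (by norm_num) (by norm_num) (by norm_num) (by norm_num)).2)
      (by norm_num) (by norm_num) x ⟨by linarith, h16⟩
  exact phi_tail x (by linarith)

lemma term_ineq (v σ t s : ℝ) (ht : 0 < t) (hs : 0 < s) :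
    v^2 * Real.exp (-(2*t*s)) + σ^2 * (1 - Real.exp (-(t*s)))^2 / s^2 ≤
      1.6862 * (v^2/(t*s+1)^2 + σ^2*t^2/(t*s+1)^2) := by
  set x : ℝ := t*s with hxdef
  have hx : 0 < x := mul_pos ht hs
  have hx1 : (0:ℝ) < x + 1 := by linarith
  have hexp1 : (x+1) * Real.exp (-x) ≤ 1 := by
    have h1 : x + 1 ≤ Real.exp x := by
      have := Real.add_one_le_exp x; linarith
    have h2 : Real.exp x * Real.exp (-x) = 1 := by
      rw [← Real.exp_add]; simp
    nlinarith [Real.exp_pos (-x)]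
  have hphi : (1 - Real.exp (-x)) * (x+1) ≤ 1.2985 * x := by
    have := phi_nonneg x hx.le
    nlinarith
  have h1e : 0 ≤ 1 - Real.exp (-x) := by
    have : Real.exp (-x) ≤ 1 := by
      rw [show (1:ℝ) = Real.exp 0 by simp]
      exact Real.exp_le_exp.2 (by linarith)
    linarith
  have hexp2 : Real.exp (-(2*t*s)) = Real.exp (-x) * Real.exp (-x) := by
    rw [← Real.exp_add, hxdef]; ring_nf
  -- bias part
  have hA : v^2 * Real.exp (-(2*t*s)) ≤ v^2 / (x+1)^2 := by
    rw [hexp2, div_eq_mul_inv]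
    refine mul_le_mul_of_nonneg_left ?_ (sq_nonneg v)
    rw [show ((x+1)^2)⁻¹ = 1/(x+1)^2 by rw [one_div], le_div_iff₀ (by positivity)]
    calc Real.exp (-x) * Real.exp (-x) * (x+1)^2
        = ((x+1)*Real.exp (-x)) * ((x+1)*Real.exp (-x)) := by ring
      _ ≤ 1 := by nlinarith [Real.exp_pos (-x), mul_nonneg hx1.le (Real.exp_pos (-x)).le]
  -- variance part
  have hB : σ^2 * (1 - Real.exp (-x))^2 / s^2 ≤ 1.6862 * (σ^2*t^2/(x+1)^2) := by
    have hr : 1.6862 * (σ^2*t^2/(x+1)^2) = (1.6862*σ^2*t^2)/(x+1)^2 := by ring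
    rw [hr, div_le_div_iff₀ (by positivity) (by positivity)]
    have hsq : ((1 - Real.exp (-x)) * (x+1))^2 ≤ (1.2985 * x)^2 := by
      have hnn : 0 ≤ (1 - Real.exp (-x)) * (x+1) := mul_nonneg h1e hx1.le
      nlinarith
    have key : σ^2 * ((1 - Real.exp (-x))*(x+1))^2 ≤ σ^2 * (1.2985*x)^2 :=
      mul_le_mul_of_nonneg_left hsq (sq_nonneg σ)
    calc σ^2 * (1 - Real.exp (-x))^2 * (x+1)^2
        = σ^2 * ((1 - Real.exp (-x))*(x+1))^2 := by ring
      _ ≤ σ^2 * (1.2985*x)^2 := key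
      _ = 1.68610225*(σ^2*t^2*s^2) := by rw [hxdef]; ring
      _ ≤ 1.6862*σ^2*t^2 * s^2 := by nlinarith [sq_nonneg (σ*t*s)]
  have hA' : v^2 * Real.exp (-(2*t*s)) ≤ 1.6862 * (v^2/(x+1)^2) := by
    have : v^2/(x+1)^2 ≤ 1.6862 * (v^2/(x+1)^2) := by nlinarith [div_nonneg (sq_nonneg v) (sq_nonneg (x+1))]
    linarith
  calc v^2 * Real.exp (-(2*t*s)) + σ^2 * (1 - Real.exp (-x))^2 / s^2
      ≤ 1.6862 * (v^2/(x+1)^2) + 1.6862 * (σ^2*t^2/(x+1)^2) := add_le_add hA' hB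
    _ = 1.6862 * (v^2/(x+1)^2 + σ^2*t^2/(x+1)^2) := by ring

end analytic

section helpers
variable {Ω : Type*} [MeasureSpace Ω] [IsProbabilityMeasure (volume : Measure Ω)] {n : ℕ}

lemma integral_risk (σ : ℝ) (δ : Ω → Fin n → ℝ)
    (h1 : ∀ i, Integrable (fun ω => δ ω i))
    (h2 : ∀ i, Integrable (fun ω => δ ω i * δ ω i))
    (hm : ∀ i, ∫ ω, δ ω i = 0)
    (hc : ∀ i, ∫ ω, δ ω i * δ ω i = σ^2)
    (a g : Fin n → ℝ) :
    ∫ ω, ∑ i, (a i + g i * δ ω i)^2 = ∑ i, (a i^2 + σ^2 * g i^2) := by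
  have hrw : ∀ i, (fun ω => (a i + g i * δ ω i)^2)
      = fun ω => (a i^2 + (2*a i*g i)*δ ω i) + (g i*g i) * (δ ω i * δ ω i) := by
    intro i; funext ω; ring
  have hint : ∀ i, Integrable (fun ω => (a i + g i * δ ω i)^2) := by
    intro i; rw [hrw i]
    exact ((integrable_const _).add ((h1 i).const_mul _)).add ((h2 i).const_mul _)
  rw [integral_finset_sum _ (fun i _ => hint i)]
  refine Finset.sum_congr rfl fun i _ => ?_
  rw [hrw i]
  calc ∫ ω, (a i ^ 2 + 2 * a i * g i * δ ω i + g i * g i * (δ ω i * δ ω i))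
      = (∫ ω, (a i ^ 2 + 2 * a i * g i * δ ω i)) + ∫ ω, g i * g i * (δ ω i * δ ω i) :=
        integral_add ((integrable_const _).add ((h1 i).const_mul _)) ((h2 i).const_mul _)
    _ = ((∫ _ω : Ω, (a i:ℝ)^2) + ∫ ω, 2 * a i * g i * δ ω i) + ∫ ω, g i * g i * (δ ω i * δ ω i) :=
        congrArg (fun z => z + ∫ ω, g i * g i * (δ ω i * δ ω i))
          (integral_add (integrable_const _) ((h1 i).const_mul _))
    _ = a i ^ 2 + σ ^ 2 * g i ^ 2 := by
        rw [integral_const_mul, integral_const_mul, hm i, hc i, integral_const]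
        simp
        ring

end helpers

section mhelp
variable {n : ℕ} (U : Matrix (Fin n) (Fin n) ℝ)

lemma sum_sq_mulVec (hUtU : Uᵀ * U = 1) (w : Fin n → ℝ) :
    ∑ i, ((U *ᵥ w) i)^2 = ∑ i, (w i)^2 := by
  have h1 : ∀ v : Fin n → ℝ, ∑ i, (v i)^2 = v ⬝ᵥ v := by
    intro v; simp [dotProduct, sq]
  rw [h1, h1, dotProduct_mulVec, ← mulVec_transpose, mulVec_mulVec, hUtU, one_mulVec]

end mhelp

section dhelp
variable {Ω : Type*} [MeasureSpace Ω] [IsProbabilityMeasure (volume : Measure Ω)] {n : ℕ}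
variable (U : Matrix (Fin n) (Fin n) ℝ) (σ : ℝ) (ε : Ω → Fin n → ℝ)

lemma delta_apply (ω : Ω) (i : Fin n) : (Uᵀ *ᵥ ε ω) i = ∑ j, Uᵀ i j * ε ω j := by
  simp [Matrix.mulVec, dotProduct]

lemma delta_integrable (hmeas : ∀ i, Integrable (fun ω => ε ω i)) (i : Fin n) :
    Integrable (fun ω => (Uᵀ *ᵥ ε ω) i) := by
  simp only [delta_apply]
  exact integrable_finset_sum _ (fun j _ => (hmeas j).const_mul _)

lemma delta_mean (hmeas : ∀ i, Integrable (fun ω => ε ω i))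
    (hmean : ∀ i, ∫ ω, ε ω i = 0) (i : Fin n) : ∫ ω, (Uᵀ *ᵥ ε ω) i = 0 := by
  simp only [delta_apply]
  rw [integral_finset_sum _ (fun j _ => (hmeas j).const_mul _)]
  refine Finset.sum_eq_zero fun j _ => ?_
  rw [integral_const_mul, hmean j, mul_zero]

lemma delta_sq_rw (ω : Ω) (i : Fin n) : (Uᵀ *ᵥ ε ω) i * (Uᵀ *ᵥ ε ω) i
    = ∑ j, ∑ k, (Uᵀ i j * Uᵀ i k) * (ε ω j * ε ω k) := by
  simp only [delta_apply]
  rw [Finset.sum_mul_sum]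
  refine Finset.sum_congr rfl fun j _ => Finset.sum_congr rfl fun k _ => by ring

lemma delta_sq_integrable (hmeas2 : ∀ i j, Integrable (fun ω => ε ω i * ε ω j)) (i : Fin n) :
    Integrable (fun ω => (Uᵀ *ᵥ ε ω) i * (Uᵀ *ᵥ ε ω) i) := by
  have h : (fun ω => (Uᵀ *ᵥ ε ω) i * (Uᵀ *ᵥ ε ω) i)
      = fun ω => ∑ j, ∑ k, (Uᵀ i j * Uᵀ i k) * (ε ω j * ε ω k) :=
    funext fun ω => delta_sq_rw U ε ω i
  rw [h]
  exact integrable_finset_sum _ fun j _ => integrable_finset_sum _ fun k _ =>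
    (hmeas2 j k).const_mul _

lemma delta_cov (hUtU : Uᵀ * U = 1)
    (hmeas2 : ∀ i j, Integrable (fun ω => ε ω i * ε ω j))
    (hcov : ∀ i j, ∫ ω, ε ω i * ε ω j = σ ^ 2 * (if i = j then 1 else 0)) (i : Fin n) :
    ∫ ω, (Uᵀ *ᵥ ε ω) i * (Uᵀ *ᵥ ε ω) i = σ^2 := by
  have h : (fun ω => (Uᵀ *ᵥ ε ω) i * (Uᵀ *ᵥ ε ω) i)
      = fun ω => ∑ j, ∑ k, (Uᵀ i j * Uᵀ i k) * (ε ω j * ε ω k) :=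
    funext fun ω => delta_sq_rw U ε ω i
  rw [h, integral_finset_sum _ (fun j _ => integrable_finset_sum _ fun k _ =>
    (hmeas2 j k).const_mul _)]
  have h2 : ∀ j, ∫ ω, ∑ k, (Uᵀ i j * Uᵀ i k) * (ε ω j * ε ω k)
      = σ^2 * (Uᵀ i j * Uᵀ i j) := by
    intro j
    rw [integral_finset_sum _ (fun k _ => (hmeas2 j k).const_mul _)]
    have h3 : ∀ k, ∫ ω, (Uᵀ i j * Uᵀ i k) * (ε ω j * ε ω k)
        = (Uᵀ i j * Uᵀ i k) * (σ^2 * (if j = k then 1 else 0)) := fun k => by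
      rw [integral_const_mul, hcov j k]
    simp only [h3, mul_ite, ite_mul, mul_zero, zero_mul, mul_one, Finset.sum_ite_eq]
    simp
    ring
  simp only [h2]
  have h4 : ∑ j, σ^2 * (Uᵀ i j * Uᵀ i j) = σ^2 * ((Uᵀ * U) i i) := by
    rw [Matrix.mul_apply, Finset.mul_sum]
    exact Finset.sum_congr rfl fun j _ => by rw [Matrix.transpose_apply]
  rw [h4, hUtU, Matrix.one_apply_eq, mul_one]

end dhelp

set_option maxHeartbeats 1000000 in
/-- Estimation risk comparison between KGF and KRR: the KGF risk equals the stated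
eigen-sum, the KRR risk equals its eigen-sum, and the former is at most
`1.6862` times the latter. -/
theorem kgf_krr_estimation_risk
    (Ω : Type*) [MeasureSpace Ω] [IsProbabilityMeasure (volume : Measure Ω)]
    (n : ℕ) (K : Matrix (Fin n) (Fin n) ℝ) (hK : K.PosDef)
    (U : Matrix (Fin n) (Fin n) ℝ) (s : Fin n → ℝ)
    (hU : U * Uᵀ = 1) (hKdecomp : K = U * Matrix.diagonal s * Uᵀ)
    (hs : ∀ i, 0 < s i)
    (t : ℝ) (ht : 0 < t) (α₀ : Fin n → ℝ) (σ : ℝ)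
    (ε : Ω → Fin n → ℝ)
    (hmeas : ∀ i, Integrable (fun ω => ε ω i))
    (hmeas2 : ∀ i j, Integrable (fun ω => ε ω i * ε ω j))
    (hmean : ∀ i, ∫ ω, ε ω i = 0)
    (hcov : ∀ i j, ∫ ω, ε ω i * ε ω j = σ ^ 2 * (if i = j then 1 else 0)) :
    let y : Ω → Fin n → ℝ := fun ω => K *ᵥ α₀ + ε ω
    let αKGF : Ω → Fin n → ℝ := fun ω =>
      (((1 : Matrix (Fin n) (Fin n) ℝ) - NormedSpace.exp (-(t • K))) * K⁻¹) *ᵥ y ω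
    let αKRR : Ω → Fin n → ℝ := fun ω =>
      (K + (1 / t) • (1 : Matrix (Fin n) (Fin n) ℝ))⁻¹ *ᵥ y ω
    let riskKGF : ℝ := ∫ ω, ∑ i, (αKGF ω i - α₀ i) ^ 2
    let riskKRR : ℝ := ∫ ω, ∑ i, (αKRR ω i - α₀ i) ^ 2
    riskKGF = ∑ i, (((Uᵀ *ᵥ α₀) i) ^ 2 * Real.exp (-(2 * t * s i)) +
        σ ^ 2 * (1 - Real.exp (-(t * s i))) ^ 2 / (s i) ^ 2) ∧
    riskKRR = ∑ i, (((Uᵀ *ᵥ α₀) i) ^ 2 / (t * s i + 1) ^ 2 +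
        σ ^ 2 * t ^ 2 / (t * s i + 1) ^ 2) ∧
    riskKGF ≤ 1.6862 * riskKRR := by
  intro y αKGF αKRR riskKGF riskKRR
  have hUtU : Uᵀ * U = 1 := mul_eq_one_comm.mp hU
  have hUunit : IsUnit U := (Matrix.isUnit_iff_isUnit_det U).mpr (Matrix.isUnit_det_of_right_inverse hU)
  have hUinv : U⁻¹ = Uᵀ := Matrix.inv_eq_right_inv hU
  have hcancel : ∀ X : Matrix (Fin n) (Fin n) ℝ, Uᵀ * (U * X) = X := fun X => by
    rw [← Matrix.mul_assoc, hUtU, Matrix.one_mul]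
  have hconjmul : ∀ d e : Fin n → ℝ,
      (U * diagonal d * Uᵀ) * (U * diagonal e * Uᵀ)
        = U * diagonal (fun i => d i * e i) * Uᵀ := by
    intro d e
    have h1 : diagonal d * diagonal e = diagonal (fun i => d i * e i) := by
      rw [Matrix.diagonal_mul_diagonal]
    simp only [Matrix.mul_assoc, hcancel]
    rw [← Matrix.mul_assoc (diagonal d), h1]
  -- exp decomposition
  have hexpK : NormedSpace.exp (-(t • K))
      = U * diagonal (fun i => Real.exp (-(t * s i))) * Uᵀ := by
    have h1 : -(t • K) = U * diagonal (fun i => -(t * s i)) * Uᵀ := by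
      rw [hKdecomp]
      have : diagonal (fun i => -(t * s i)) = -(t • diagonal s) := by
        rw [← Matrix.diagonal_smul, ← Matrix.diagonal_neg]
        congr 1
      rw [this]
      simp [Matrix.mul_smul, Matrix.smul_mul, Matrix.mul_neg, Matrix.neg_mul]
    rw [h1, ← hUinv, Matrix.exp_conj U _ hUunit, Matrix.exp_diagonal, hUinv]
    congr 2
    rw [Pi.exp_def]
    funext i
    rw [show (NormedSpace.exp : ℝ → ℝ) = Real.exp from Real.exp_eq_exp_ℝ.symm]
  -- K⁻¹
  have hKinv : K⁻¹ = U * diagonal (fun i => (s i)⁻¹) * Uᵀ := by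
    apply Matrix.inv_eq_right_inv
    rw [hKdecomp, hconjmul]
    have : (fun i => s i * (s i)⁻¹) = fun _ : Fin n => (1:ℝ) := by
      funext i; exact mul_inv_cancel₀ (hs i).ne'
    rw [this, Matrix.diagonal_one, Matrix.mul_one, hU]
  -- KRR inverse
  have hKRRinv : (K + (1 / t) • (1 : Matrix (Fin n) (Fin n) ℝ))⁻¹
      = U * diagonal (fun i => (s i + 1/t)⁻¹) * Uᵀ := by
    apply Matrix.inv_eq_right_inv
    have hsm : (1/t) • (1 : Matrix (Fin n) (Fin n) ℝ)
        = U * diagonal (fun _ : Fin n => 1/t) * Uᵀ := by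
      have hd : (diagonal (fun _ : Fin n => 1/t) : Matrix (Fin n) (Fin n) ℝ)
          = (1/t) • 1 := (Matrix.smul_one_eq_diagonal _).symm
      rw [hd, Matrix.mul_smul, Matrix.mul_one, Matrix.smul_mul, hU]
    have hsum : K + (1/t) • (1 : Matrix (Fin n) (Fin n) ℝ)
        = U * diagonal (fun i => s i + 1/t) * Uᵀ := by
      rw [hKdecomp, hsm, ← Matrix.add_mul, ← Matrix.mul_add, ← Matrix.diagonal_add]
    rw [hsum, hconjmul]
    have : (fun i => (s i + 1/t) * (s i + 1/t)⁻¹) = fun _ : Fin n => (1:ℝ) := by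
      funext i
      exact mul_inv_cancel₀ (add_pos (hs i) (one_div_pos.mpr ht)).ne'
    rw [this, Matrix.diagonal_one, Matrix.mul_one, hU]
  -- KGF matrix
  have hMKGF : ((1 : Matrix (Fin n) (Fin n) ℝ) - NormedSpace.exp (-(t • K))) * K⁻¹
      = U * diagonal (fun i => (1 - Real.exp (-(t * s i))) * (s i)⁻¹) * Uᵀ := by
    have h1 : (1 : Matrix (Fin n) (Fin n) ℝ) - NormedSpace.exp (-(t • K))
        = U * diagonal (fun i => 1 - Real.exp (-(t * s i))) * Uᵀ := by
      rw [hexpK]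
      have hone : (1 : Matrix (Fin n) (Fin n) ℝ) = U * diagonal (fun _ : Fin n => (1:ℝ)) * Uᵀ := by
        rw [Matrix.diagonal_one, Matrix.mul_one, hU]
      rw [hone, ← Matrix.sub_mul, ← Matrix.mul_sub, ← Matrix.diagonal_sub]
    rw [h1, hKinv, hconjmul]
  -- abbreviations
  set v : Fin n → ℝ := Uᵀ *ᵥ α₀ with hv
  set δ : Ω → Fin n → ℝ := fun ω => Uᵀ *ᵥ ε ω with hδ
  -- generic risk formula
  have hrisk : ∀ g : Fin n → ℝ,
      (∫ ω, ∑ i, (((U * diagonal g * Uᵀ) *ᵥ y ω) i - α₀ i)^2)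
      = ∑ i, (((g i * s i - 1) * v i)^2 + σ^2 * g i^2) := by
    intro g
    have hUty : ∀ ω, Uᵀ *ᵥ y ω = fun j => s j * v j + δ ω j := by
      intro ω
      show Uᵀ *ᵥ (K *ᵥ α₀ + ε ω) = _
      rw [Matrix.mulVec_add]
      have h1 : Uᵀ *ᵥ (K *ᵥ α₀) = fun j => s j * v j := by
        rw [Matrix.mulVec_mulVec, hKdecomp, ← Matrix.mul_assoc, ← Matrix.mul_assoc, hUtU,
          Matrix.one_mul, ← Matrix.mulVec_mulVec]
        funext j
        rw [Matrix.mulVec_diagonal]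
      rw [h1]
      rfl
    have halpha : α₀ = U *ᵥ v := by
      rw [hv, Matrix.mulVec_mulVec, hU, Matrix.one_mulVec]
    have herr : ∀ ω, (fun i => ((U * diagonal g * Uᵀ) *ᵥ y ω) i - α₀ i)
        = U *ᵥ (fun j => (g j * s j - 1) * v j + g j * δ ω j) := by
      intro ω
      have h2 : (U * diagonal g * Uᵀ) *ᵥ y ω
          = U *ᵥ (diagonal g *ᵥ (Uᵀ *ᵥ y ω)) := by
        rw [Matrix.mulVec_mulVec, Matrix.mulVec_mulVec]
      funext i
      rw [h2, hUty ω]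
      conv_lhs => rw [halpha]
      rw [show (U *ᵥ (diagonal g *ᵥ fun j => s j * v j + δ ω j)) i - (U *ᵥ v) i
          = (U *ᵥ (diagonal g *ᵥ (fun j => s j * v j + δ ω j) - v)) i by
        rw [Matrix.mulVec_sub]; rfl]
      congr 1
      funext j
      rw [Pi.sub_apply, Matrix.mulVec_diagonal]
      ring
    have hsum : ∀ ω, ∑ i, (((U * diagonal g * Uᵀ) *ᵥ y ω) i - α₀ i)^2
        = ∑ i, ((g i * s i - 1) * v i + g i * δ ω i)^2 := by
      intro ω
      calc ∑ i, (((U * diagonal g * Uᵀ) *ᵥ y ω) i - α₀ i)^2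
          = ∑ i, ((U *ᵥ (fun j => (g j * s j - 1) * v j + g j * δ ω j)) i)^2 := by
            refine Finset.sum_congr rfl fun i _ => ?_
            rw [congrFun (herr ω) i]
        _ = ∑ i, ((g i * s i - 1) * v i + g i * δ ω i)^2 := sum_sq_mulVec U hUtU _
    simp only [hsum]
    exact integral_risk σ δ (delta_integrable U ε hmeas)
      (delta_sq_integrable U ε hmeas2)
      (delta_mean U ε hmeas hmean)
      (delta_cov U σ ε hUtU hmeas2 hcov)
      (fun i => (g i * s i - 1) * v i) g
  -- KGF risk
  have hKGFrisk : riskKGF = ∑ i, (v i^2 * Real.exp (-(2 * t * s i)) +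
      σ^2 * (1 - Real.exp (-(t * s i)))^2 / (s i)^2) := by
    have h0 : riskKGF = ∫ ω, ∑ i,
        (((U * diagonal (fun i => (1 - Real.exp (-(t * s i))) * (s i)⁻¹) * Uᵀ) *ᵥ y ω) i
          - α₀ i)^2 := by
      simp only [riskKGF, αKGF, hMKGF]
    rw [h0, hrisk]
    refine Finset.sum_congr rfl fun i _ => ?_
    have hsi : s i ≠ 0 := (hs i).ne'
    have hexp2 : Real.exp (-(2 * t * s i)) = Real.exp (-(t * s i)) * Real.exp (-(t * s i)) := by
      rw [← Real.exp_add]; ring_nf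
    have hg : (1 - Real.exp (-(t * s i))) * (s i)⁻¹ * s i - 1 = -Real.exp (-(t * s i)) := by
      field_simp
      ring
    rw [hg, hexp2]
    field_simp
  -- KRR risk
  have hKRRrisk : riskKRR = ∑ i, (v i^2 / (t * s i + 1)^2 +
      σ^2 * t^2 / (t * s i + 1)^2) := by
    have h0 : riskKRR = ∫ ω, ∑ i,
        (((U * diagonal (fun i => (s i + 1/t)⁻¹) * Uᵀ) *ᵥ y ω) i - α₀ i)^2 := by
      simp only [riskKRR, αKRR, hKRRinv]
    rw [h0, hrisk]
    refine Finset.sum_congr rfl fun i _ => ?_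
    have hsi : (0:ℝ) < s i := hs i
    have hden : (0:ℝ) < s i + 1/t := add_pos (hs i) (one_div_pos.mpr ht)
    have hden2 : (0:ℝ) < t * s i + 1 := by positivity
    field_simp
    ring
  refine ⟨hKGFrisk, hKRRrisk, ?_⟩
  rw [hKGFrisk, hKRRrisk, Finset.mul_sum]
  exact Finset.sum_le_sum fun i _ => term_ineq (v i) σ t (s i) ht (hs i)
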